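/- If T is in the chart domain U_Λ^π (i.e., T = Q_πᵀ Λ^π Q_π with Q_π orthogonal and LU-positive) and E is a sign diagonal matrix, then ETE is also in U_Λ^π; moreover the LU-positive orthogonal matrix diagonalizing ETE is E Q_π E. -/

import Mathlib

open Matrix

/-- `L` is lower triangular with unit diagonal. -/
def IsUnipLower {n : ℕ} (L : Matrix (Fin n) (Fin n) ℝ) : Prop :=
  (∀ i j : Fin n, i < j → L i j = 0) ∧ ∀ i : Fin n, L i i = 1

/-- `U` is upper triangular with strictly positive diagonal. -/
def IsUpperTriPos {n : ℕ} (U : Matrix (Fin n) (Fin n) ℝ) : Prop :=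
  (∀ i j : Fin n, j < i → U i j = 0) ∧ ∀ i : Fin n, 0 < U i i

/-- The leading principal minor of order `k` of `M`. -/
def leadingMinor {n : ℕ} (M : Matrix (Fin n) (Fin n) ℝ) (k : ℕ) (h : k ≤ n) : ℝ :=
  (Matrix.of fun i j : Fin k => M (Fin.castLE h i) (Fin.castLE h j)).det

/-- `M` is LU-positive: all leading principal minors are strictly positive. -/
def LUPositive {n : ℕ} (M : Matrix (Fin n) (Fin n) ℝ) : Prop :=
  ∀ k (h : k ≤ n), 0 < leadingMinor M k h

/-- `Q` is orthogonal. -/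
def IsOrth {n : ℕ} (Q : Matrix (Fin n) (Fin n) ℝ) : Prop := Qᵀ * Q = 1

/-- `E` is a sign diagonal `diag(±1, …, ±1)`. -/
def IsSignDiag {n : ℕ} (E : Matrix (Fin n) (Fin n) ℝ) : Prop :=
  (∀ i j : Fin n, i ≠ j → E i j = 0) ∧ ∀ i : Fin n, E i i = 1 ∨ E i i = -1

/-- `M` is tridiagonal. -/
def IsTridiag {n : ℕ} (M : Matrix (Fin n) (Fin n) ℝ) : Prop :=
  ∀ i j : Fin n, ((i : ℕ) + 1 < (j : ℕ) ∨ (j : ℕ) + 1 < (i : ℕ)) → M i j = 0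

/-- If `T ∈ U_Λ^π`, i.e. `T = Q_πᵀ Λ^π Q_π` with `Q_π` orthogonal LU-positive, and `E` is
a sign diagonal, then `E T E ∈ U_Λ^π`, diagonalized by the LU-positive orthogonal matrix
`E Q_π E`. -/
theorem stmt9 (n : ℕ) (lam : Fin n → ℝ) (hlam : Function.Injective lam)
    (π : Equiv.Perm (Fin n)) (T Qπ E : Matrix (Fin n) (Fin n) ℝ)
    (hQ : IsOrth Qπ) (hLU : LUPositive Qπ)
    (hT : T = Qπᵀ * Matrix.diagonal (fun i => lam (π i)) * Qπ)
    (hE : IsSignDiag E) :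
    IsOrth (E * Qπ * E) ∧ LUPositive (E * Qπ * E) ∧
      E * T * E = (E * Qπ * E)ᵀ * Matrix.diagonal (fun i => lam (π i)) * (E * Qπ * E) := by
  obtain ⟨hEoff, hEdiag⟩ := hE
  set d : Fin n → ℝ := fun i => E i i with hd
  have hEeq : E = Matrix.diagonal d := by
    ext i j
    by_cases h : i = j
    · subst h; simp [Matrix.diagonal, hd]
    · simp [Matrix.diagonal, h, hEoff i j h]
  have hd2 : ∀ i, d i * d i = 1 := fun i => by
    rcases hEdiag i with h | h <;> simp [hd, h]
  have hEE : E * E = 1 := by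
    rw [hEeq, Matrix.diagonal_mul_diagonal]
    rw [show (fun i => d i * d i) = fun _ : Fin n => (1:ℝ) from funext hd2,
      Matrix.diagonal_one]
  have hEE' : ∀ M : Matrix (Fin n) (Fin n) ℝ, E * (E * M) = M := fun M => by
    rw [← Matrix.mul_assoc, hEE, Matrix.one_mul]
  have hQ' : ∀ M : Matrix (Fin n) (Fin n) ℝ, Qπᵀ * (Qπ * M) = M := fun M => by
    rw [← Matrix.mul_assoc, hQ, Matrix.one_mul]
  have hEt : Eᵀ = E := by rw [hEeq]; exact Matrix.diagonal_transpose d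
  have horth : IsOrth (E * Qπ * E) := by
    unfold IsOrth
    simp only [Matrix.transpose_mul, hEt, Matrix.mul_assoc]
    rw [hEE', hQ', hEE]
  refine ⟨horth, ?_, ?_⟩
  · intro k h
    have hentry : (Matrix.of fun i j : Fin k =>
        (E * Qπ * E) (Fin.castLE h i) (Fin.castLE h j)) =
        Matrix.diagonal (fun i : Fin k => d (Fin.castLE h i)) *
          (Matrix.of fun i j : Fin k => Qπ (Fin.castLE h i) (Fin.castLE h j)) *
          Matrix.diagonal (fun i : Fin k => d (Fin.castLE h i)) := by
      ext i j
      simp [hEeq, Matrix.mul_diagonal, Matrix.diagonal_mul]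
    have hdet1 : (Matrix.diagonal (fun i : Fin k => d (Fin.castLE h i))).det *
        (Matrix.diagonal (fun i : Fin k => d (Fin.castLE h i))).det = 1 := by
      rw [Matrix.det_diagonal, ← Finset.prod_mul_distrib]
      simp [hd2]
    have hpos := hLU k h
    unfold leadingMinor at hpos ⊢
    rw [hentry, Matrix.det_mul, Matrix.det_mul]
    rw [show (Matrix.diagonal (fun i : Fin k => d (Fin.castLE h i))).det *
        (Matrix.of fun i j : Fin k => Qπ (Fin.castLE h i) (Fin.castLE h j)).det *
        (Matrix.diagonal (fun i : Fin k => d (Fin.castLE h i))).det =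
        ((Matrix.diagonal (fun i : Fin k => d (Fin.castLE h i))).det *
         (Matrix.diagonal (fun i : Fin k => d (Fin.castLE h i))).det) *
        (Matrix.of fun i j : Fin k => Qπ (Fin.castLE h i) (Fin.castLE h j)).det
        from by ring, hdet1, one_mul]
    exact hpos
  · have hEL : E * Matrix.diagonal (fun i => lam (π i)) * E
        = Matrix.diagonal (fun i => lam (π i)) := by
      rw [hEeq, Matrix.diagonal_mul_diagonal, Matrix.diagonal_mul_diagonal]
      rw [show (fun i => d i * lam (π i) * d i) = fun i => lam (π i) from
        funext fun i => by
          rw [show d i * lam (π i) * d i = lam (π i) * (d i * d i) from by ring,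
            hd2 i, mul_one]]
    have hEL' : ∀ M : Matrix (Fin n) (Fin n) ℝ,
        E * (Matrix.diagonal (fun i => lam (π i)) * (E * M)) =
          Matrix.diagonal (fun i => lam (π i)) * M := fun M => by
      rw [show E * (Matrix.diagonal (fun i => lam (π i)) * (E * M)) =
          (E * Matrix.diagonal (fun i => lam (π i)) * E) * M from by
        simp only [Matrix.mul_assoc], hEL]
    simp only [hT, Matrix.transpose_mul, hEt, Matrix.mul_assoc]
    rw [hEL']
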